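/- In the two-group factor-model setup, suppose α₁ = α₂ = α and p₁(n)/p₂(n) → 0. Then a_{1,p₁(n)} / a_{2,p₂(n)} → 0 and, for every x > 0, P(Q_{p₁(n), p₂(n)} ≤ a_{2,p₂(n)} x) → Ψ_α(x) as n → ∞. (Proposition 2, Case 2, second subcase.) -/

import Mathlib

set_option maxHeartbeats 1000000


open MeasureTheory ProbabilityTheory Filter

noncomputable section

/-- The Fréchet distribution function with tail index `α`. -/
def frechetCDF (α x : ℝ) : ℝ := if 0 < x then Real.exp (-x ^ (-α)) else 0

/-- The norming constant `a_p = (Σ_{i<p} σ_i^α)^{1/α}`. -/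
def normConst (σ : ℕ → ℝ) (α : ℝ) (p : ℕ) : ℝ :=
  (∑ i ∈ Finset.range p, σ i ^ α) ^ (1 / α)

/-- Maximum of the first `p₁` variables of the first group and the first `p₂`
variables of the second group. -/
def Qmax {Ω : Type*} (X₁ X₂ : ℕ → Ω → ℝ) (p₁ p₂ : ℕ) (ω : Ω) : ℝ :=
  max (⨆ i : Fin p₁, X₁ i ω) (⨆ j : Fin p₂, X₂ j ω)

/-- Codomains of the family consisting of the factor `Z` and the two noise arrays. -/
def mixCodom (d : ℕ) : Unit ⊕ ℕ ⊕ ℕ → Type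
  | Sum.inl _ => Fin d → ℝ
  | Sum.inr _ => ℝ

instance mixCodomMeasurableSpace (d : ℕ) : ∀ i, MeasurableSpace (mixCodom d i)
  | Sum.inl _ => inferInstanceAs (MeasurableSpace (Fin d → ℝ))
  | Sum.inr (Sum.inl _) => inferInstanceAs (MeasurableSpace ℝ)
  | Sum.inr (Sum.inr _) => inferInstanceAs (MeasurableSpace ℝ)

/-- The family consisting of the factor `Z` and the two noise arrays. -/
def mixFun {Ω : Type*} {d : ℕ} (Z : Ω → Fin d → ℝ) (ε₁ ε₂ : ℕ → Ω → ℝ) :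
    ∀ i : Unit ⊕ ℕ ⊕ ℕ, Ω → mixCodom d i
  | Sum.inl _ => Z
  | Sum.inr (Sum.inl i) => ε₁ i
  | Sum.inr (Sum.inr j) => ε₂ j



lemma key_sum (α : ℝ) (hα : 0 < α) (T : ℝ → ℝ) (hT0 : ∀ y, 0 ≤ T y)
    (htail : Tendsto (fun y => y ^ α * T y) atTop (nhds 1))
    (C₁ C₂ : ℝ) (hC₁ : 0 < C₁) (σs : ℕ → ℝ) (hσ : ∀ i, σs i ∈ Set.Icc C₁ C₂)
    (k : ℕ → ℕ) (t : ℕ → ℝ) (ht : Tendsto t atTop atTop)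
    (M : ℝ) (hM : 0 ≤ M) (c : ℕ → ℝ) (hc : ∀ i, |c i| ≤ M)
    (L : ℝ) (hL : 0 ≤ L)
    (hs : Tendsto (fun n => (∑ i ∈ Finset.range (k n), σs i ^ α) / t n ^ α) atTop (nhds L)) :
    Tendsto (fun n => ∑ i ∈ Finset.range (k n), T ((t n - c i) / σs i)) atTop (nhds L) := by
  have hC₂ : 0 < C₂ := lt_of_lt_of_le hC₁ (le_trans (hσ 0).1 (hσ 0).2)
  rw [Metric.tendsto_nhds]
  intro ε hε
  set δ : ℝ := min 1 (ε / (2 * (L + 1))) with hδdef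
  have hδpos : 0 < δ := lt_min one_pos (by positivity)
  have hδ1 : δ ≤ 1 := min_le_left _ _
  have hδL : δ * (L + 1) ≤ ε / 2 := by
    have h2 : δ ≤ ε / (2 * (L + 1)) := min_le_right _ _
    have hL1 : (0:ℝ) < L + 1 := by linarith
    calc δ * (L + 1) ≤ (ε / (2 * (L + 1))) * (L + 1) := by
          exact mul_le_mul_of_nonneg_right h2 hL1.le
      _ = ε / 2 := by field_simp
  -- tail bound threshold
  have h1 : ∀ᶠ y in atTop, |y ^ α * T y - 1| < δ := by
    have := Metric.tendsto_nhds.mp htail δ hδpos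
    simpa [Real.dist_eq] using this
  obtain ⟨y₀, hy₀⟩ := eventually_atTop.mp h1
  set y₁ : ℝ := max y₀ 1 with hy₁def
  have hy₁pos : (0:ℝ) < y₁ := lt_of_lt_of_le one_pos (le_max_right _ _)
  -- ratio limits
  have htsub : Tendsto (fun n => t n - M) atTop atTop := tendsto_atTop_add_const_right _ (-M) ht |>.congr (by intro n; ring)
  have htadd : Tendsto (fun n => t n + M) atTop atTop := tendsto_atTop_add_const_right _ M ht
  have hrm : Tendsto (fun n => t n / (t n - M)) atTop (nhds 1) := by
    have h0 : Tendsto (fun n => M / (t n - M)) atTop (nhds 0) :=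
      Tendsto.div_atTop tendsto_const_nhds htsub
    have h2 : Tendsto (fun n => 1 + M / (t n - M)) atTop (nhds 1) := by
      simpa using tendsto_const_nhds.add h0
    refine h2.congr' ?_
    filter_upwards [htsub.eventually_ge_atTop 1] with n hn
    have : t n - M ≠ 0 := by linarith
    field_simp; ring
  have hrp : Tendsto (fun n => t n / (t n + M)) atTop (nhds 1) := by
    have h0 : Tendsto (fun n => M / (t n + M)) atTop (nhds 0) :=
      Tendsto.div_atTop tendsto_const_nhds htadd
    have h2 : Tendsto (fun n => 1 - M / (t n + M)) atTop (nhds 1) := by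
      simpa using tendsto_const_nhds.sub h0
    refine h2.congr' ?_
    filter_upwards [htadd.eventually_ge_atTop 1] with n hn
    have : t n + M ≠ 0 := by linarith
    field_simp; ring
  have hrmα : Tendsto (fun n => (t n / (t n - M)) ^ α) atTop (nhds 1) := by
    have := hrm.rpow_const (p := α) (Or.inl one_ne_zero)
    simpa using this
  have hrpα : Tendsto (fun n => (t n / (t n + M)) ^ α) atTop (nhds 1) := by
    have := hrp.rpow_const (p := α) (Or.inl one_ne_zero)
    simpa using this
  set A : ℕ → ℝ := fun n => ∑ i ∈ Finset.range (k n), σs i ^ α with hAdef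
  have hU : Tendsto (fun n => (1 + δ) * ((A n / t n ^ α) * (t n / (t n - M)) ^ α)) atTop
      (nhds ((1 + δ) * (L * 1))) := tendsto_const_nhds.mul (hs.mul hrmα)
  have hW : Tendsto (fun n => (1 - δ) * ((A n / t n ^ α) * (t n / (t n + M)) ^ α)) atTop
      (nhds ((1 - δ) * (L * 1))) := tendsto_const_nhds.mul (hs.mul hrpα)
  have hUlt : ∀ᶠ n in atTop, (1 + δ) * ((A n / t n ^ α) * (t n / (t n - M)) ^ α) < L + ε := by
    refine hU.eventually_lt_const ?_
    have : δ * L ≤ ε / 2 := le_trans (by nlinarith [hδpos.le]) hδL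
    nlinarith [hε]
  have hWgt : ∀ᶠ n in atTop, L - ε < (1 - δ) * ((A n / t n ^ α) * (t n / (t n + M)) ^ α) := by
    refine hW.eventually_const_lt ?_
    have : δ * L ≤ ε / 2 := le_trans (by nlinarith [hδpos.le]) hδL
    nlinarith [hε]
  have hEv : ∀ᶠ n in atTop, C₂ * y₁ + M + 1 ≤ t n := ht.eventually_ge_atTop _
  filter_upwards [hEv, hUlt, hWgt] with n hn hUn hWn
  have htn_pos : 0 < t n := by nlinarith [mul_pos hC₂ hy₁pos]
  have htM_pos : (0:ℝ) < t n - M := by nlinarith [mul_pos hC₂ hy₁pos]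
  have htMp_pos : (0:ℝ) < t n + M := by linarith
  -- rewrite U and W on this n
  have htnα : (0:ℝ) < t n ^ α := Real.rpow_pos_of_pos htn_pos _
  have hUeq : (1 + δ) * ((A n / t n ^ α) * (t n / (t n - M)) ^ α)
      = (1 + δ) * (A n / (t n - M) ^ α) := by
    rw [Real.div_rpow htn_pos.le htM_pos.le]
    have h2 : ((t n - M) ^ α : ℝ) ≠ 0 := (Real.rpow_pos_of_pos htM_pos _).ne'
    field_simp
  have hWeq : (1 - δ) * ((A n / t n ^ α) * (t n / (t n + M)) ^ α)
      = (1 - δ) * (A n / (t n + M) ^ α) := by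
    rw [Real.div_rpow htn_pos.le htMp_pos.le]
    have h2 : ((t n + M) ^ α : ℝ) ≠ 0 := (Real.rpow_pos_of_pos htMp_pos _).ne'
    field_simp
  -- per-index bounds
  have hbound : ∀ i ∈ Finset.range (k n),
      (1 - δ) * (σs i ^ α / (t n + M) ^ α) ≤ T ((t n - c i) / σs i) ∧
      T ((t n - c i) / σs i) ≤ (1 + δ) * (σs i ^ α / (t n - M) ^ α) := by
    intro i _
    have hσi := hσ i
    have hσpos : 0 < σs i := lt_of_lt_of_le hC₁ hσi.1
    have hci := abs_le.mp (hc i)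
    set a : ℝ := (t n - c i) / σs i with hadef
    have harg_ge : (t n - M) / σs i ≤ a := by
      rw [hadef]; gcongr; linarith [hci.1]
    have harg_le : a ≤ (t n + M) / σs i := by
      rw [hadef]; gcongr; linarith [hci.2]
    have hay₁ : y₁ ≤ a := by
      have h4 : σs i * y₁ ≤ t n - M := by nlinarith [mul_le_mul_of_nonneg_right hσi.2 hy₁pos.le]
      have : y₁ ≤ (t n - M) / σs i := (le_div_iff₀ hσpos).mpr (by linarith)
      linarith [harg_ge]
    have hapos : 0 < a := lt_of_lt_of_le hy₁pos hay₁
    have htail_i := hy₀ a (le_trans (le_max_left _ _) hay₁)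
    have habs := abs_lt.mp htail_i
    have haα : 0 < a ^ α := Real.rpow_pos_of_pos hapos _
    have hTub : T a ≤ (1 + δ) / a ^ α := by
      rw [le_div_iff₀ haα]; linarith [habs.2]
    have hTlb : (1 - δ) / a ^ α ≤ T a := by
      rw [div_le_iff₀ haα]; linarith [habs.1]
    have hfrac_ub : (1:ℝ) / a ^ α ≤ σs i ^ α / (t n - M) ^ α := by
      have h5 : ((t n - M) / σs i) ^ α ≤ a ^ α :=
        Real.rpow_le_rpow (by positivity) harg_ge hα.le
      rw [Real.div_rpow htM_pos.le hσpos.le] at h5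
      rw [div_le_div_iff₀ haα (by positivity), one_mul]
      calc (t n - M) ^ α = ((t n - M) ^ α / σs i ^ α) * σs i ^ α := by
            field_simp
        _ ≤ a ^ α * σs i ^ α := by gcongr
        _ = σs i ^ α * a ^ α := by ring
    have hfrac_lb : σs i ^ α / (t n + M) ^ α ≤ (1:ℝ) / a ^ α := by
      have h5 : a ^ α ≤ ((t n + M) / σs i) ^ α :=
        Real.rpow_le_rpow hapos.le harg_le hα.le
      rw [Real.div_rpow htMp_pos.le hσpos.le] at h5
      rw [div_le_div_iff₀ (by positivity) haα]
      calc σs i ^ α * a ^ α ≤ σs i ^ α * ((t n + M) ^ α / σs i ^ α) := by gcongr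
        _ = (t n + M) ^ α := by field_simp
        _ = 1 * (t n + M) ^ α := (one_mul _).symm
    constructor
    · calc (1 - δ) * (σs i ^ α / (t n + M) ^ α) ≤ (1 - δ) * (1 / a ^ α) := by
            apply mul_le_mul_of_nonneg_left hfrac_lb (by linarith)
        _ = (1 - δ) / a ^ α := by ring
        _ ≤ T a := hTlb
    · calc T a ≤ (1 + δ) / a ^ α := hTub
        _ = (1 + δ) * (1 / a ^ α) := by ring
        _ ≤ (1 + δ) * (σs i ^ α / (t n - M) ^ α) := by
            apply mul_le_mul_of_nonneg_left hfrac_ub (by linarith)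
  -- sum the bounds
  have hSub : (∑ i ∈ Finset.range (k n), T ((t n - c i) / σs i))
      ≤ (1 + δ) * (A n / (t n - M) ^ α) := by
    calc (∑ i ∈ Finset.range (k n), T ((t n - c i) / σs i))
        ≤ ∑ i ∈ Finset.range (k n), (1 + δ) * (σs i ^ α / (t n - M) ^ α) :=
          Finset.sum_le_sum (fun i hi => (hbound i hi).2)
      _ = (1 + δ) * (A n / (t n - M) ^ α) := by
          rw [← Finset.mul_sum, ← Finset.sum_div]
  have hSlb : (1 - δ) * (A n / (t n + M) ^ α)
      ≤ ∑ i ∈ Finset.range (k n), T ((t n - c i) / σs i) := by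
    calc (1 - δ) * (A n / (t n + M) ^ α)
        = ∑ i ∈ Finset.range (k n), (1 - δ) * (σs i ^ α / (t n + M) ^ α) := by
          rw [← Finset.mul_sum, ← Finset.sum_div]
      _ ≤ ∑ i ∈ Finset.range (k n), T ((t n - c i) / σs i) :=
          Finset.sum_le_sum (fun i hi => (hbound i hi).1)
  rw [hUeq] at hUn
  rw [hWeq] at hWn
  rw [Real.dist_eq, abs_sub_lt_iff]
  constructor <;> linarith

lemma log_one_sub_bounds {u : ℝ} (h0 : 0 ≤ u) (h2 : u ≤ 1/2) :
    -u - 2 * u ^ 2 ≤ Real.log (1 - u) ∧ Real.log (1 - u) ≤ -u := by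
  have h1 : (0:ℝ) < 1 - u := by linarith
  constructor
  · have hinv : Real.log (1 - u)⁻¹ ≤ (1 - u)⁻¹ - 1 :=
      Real.log_le_sub_one_of_pos (by positivity)
    rw [Real.log_inv] at hinv
    have hie : (1 - u)⁻¹ - 1 = u / (1 - u) := by field_simp; ring
    rw [hie] at hinv
    have hfrac : u / (1 - u) ≤ u + 2 * u ^ 2 := by
      rw [div_le_iff₀ h1]; nlinarith
    linarith
  · have := Real.log_le_sub_one_of_pos h1
    linarith

lemma key_bd (α : ℝ) (hα : 0 < α) (T : ℝ → ℝ) (hT0 : ∀ y, 0 ≤ T y)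
    (htail : Tendsto (fun y => y ^ α * T y) atTop (nhds 1))
    (C₁ C₂ : ℝ) (hC₁ : 0 < C₁) (σs : ℕ → ℝ) (hσ : ∀ i, σs i ∈ Set.Icc C₁ C₂)
    (t : ℕ → ℝ) (ht : Tendsto t atTop atTop)
    (M : ℝ) (hM : 0 ≤ M) (c : ℕ → ℝ) (hc : ∀ i, |c i| ≤ M) :
    ∀ᶠ n in atTop, (1 ≤ t n - M) ∧ ∀ i : ℕ,
      T ((t n - c i) / σs i) ≤ 2 * C₂ ^ α / (t n - M) ^ α := by
  have hC₂ : 0 < C₂ := lt_of_lt_of_le hC₁ (le_trans (hσ 0).1 (hσ 0).2)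
  have h1 : ∀ᶠ y in atTop, |y ^ α * T y - 1| < 1 := by
    have := Metric.tendsto_nhds.mp htail 1 one_pos
    simpa [Real.dist_eq] using this
  obtain ⟨y₀, hy₀⟩ := eventually_atTop.mp h1
  set y₁ : ℝ := max y₀ 1 with hy₁def
  have hy₁pos : (0:ℝ) < y₁ := lt_of_lt_of_le one_pos (le_max_right _ _)
  filter_upwards [ht.eventually_ge_atTop (C₂ * y₁ + M + 1)] with n hn
  have htM_pos : (0:ℝ) < t n - M := by nlinarith [mul_pos hC₂ hy₁pos]
  have htM1 : (1:ℝ) ≤ t n - M := by nlinarith [mul_pos hC₂ hy₁pos]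
  refine ⟨htM1, fun i => ?_⟩
  have hσi := hσ i
  have hσpos : 0 < σs i := lt_of_lt_of_le hC₁ hσi.1
  have hci := abs_le.mp (hc i)
  set a : ℝ := (t n - c i) / σs i with hadef
  have harg_ge : (t n - M) / σs i ≤ a := by
    rw [hadef]; gcongr; linarith [hci.1]
  have hay₁ : y₁ ≤ a := by
    have h4 : σs i * y₁ ≤ t n - M := by nlinarith [mul_le_mul_of_nonneg_right hσi.2 hy₁pos.le]
    have : y₁ ≤ (t n - M) / σs i := (le_div_iff₀ hσpos).mpr (by linarith)
    linarith [harg_ge]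
  have hapos : 0 < a := lt_of_lt_of_le hy₁pos hay₁
  have htail_i := hy₀ a (le_trans (le_max_left _ _) hay₁)
  have habs := abs_lt.mp htail_i
  have haα : 0 < a ^ α := Real.rpow_pos_of_pos hapos _
  have hTub : T a ≤ 2 / a ^ α := by
    rw [le_div_iff₀ haα]; linarith [habs.2]
  have hfrac_ub : (1:ℝ) / a ^ α ≤ σs i ^ α / (t n - M) ^ α := by
    have h5 : ((t n - M) / σs i) ^ α ≤ a ^ α :=
      Real.rpow_le_rpow (by positivity) harg_ge hα.le
    rw [Real.div_rpow htM_pos.le hσpos.le] at h5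
    rw [div_le_div_iff₀ haα (by positivity), one_mul]
    calc (t n - M) ^ α = ((t n - M) ^ α / σs i ^ α) * σs i ^ α := by field_simp
      _ ≤ a ^ α * σs i ^ α := by gcongr
      _ = σs i ^ α * a ^ α := by ring
  have hσC : σs i ^ α ≤ C₂ ^ α := Real.rpow_le_rpow hσpos.le hσi.2 hα.le
  calc T a ≤ 2 / a ^ α := hTub
    _ = 2 * (1 / a ^ α) := by ring
    _ ≤ 2 * (σs i ^ α / (t n - M) ^ α) := by
        apply mul_le_mul_of_nonneg_left hfrac_ub (by norm_num)
    _ ≤ 2 * (C₂ ^ α / (t n - M) ^ α) := by gcongr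
    _ = 2 * C₂ ^ α / (t n - M) ^ α := by ring

lemma key_prod (α : ℝ) (hα : 0 < α) (T : ℝ → ℝ) (hT0 : ∀ y, 0 ≤ T y)
    (htail : Tendsto (fun y => y ^ α * T y) atTop (nhds 1))
    (C₁ C₂ : ℝ) (hC₁ : 0 < C₁) (σs : ℕ → ℝ) (hσ : ∀ i, σs i ∈ Set.Icc C₁ C₂)
    (k : ℕ → ℕ) (t : ℕ → ℝ) (ht : Tendsto t atTop atTop)
    (M : ℝ) (hM : 0 ≤ M) (c : ℕ → ℝ) (hc : ∀ i, |c i| ≤ M)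
    (L : ℝ) (hL : 0 ≤ L)
    (hs : Tendsto (fun n => (∑ i ∈ Finset.range (k n), σs i ^ α) / t n ^ α) atTop (nhds L)) :
    Tendsto (fun n => ∏ i ∈ Finset.range (k n), (1 - T ((t n - c i) / σs i))) atTop
      (nhds (Real.exp (-L))) := by
  have hC₂ : 0 < C₂ := lt_of_lt_of_le hC₁ (le_trans (hσ 0).1 (hσ 0).2)
  set S : ℕ → ℝ := fun n => ∑ i ∈ Finset.range (k n), T ((t n - c i) / σs i) with hSdef
  have hS : Tendsto S atTop (nhds L) := key_sum α hα T hT0 htail C₁ C₂ hC₁ σs hσ k t ht M hM c hc L hL hs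
  set κ : ℕ → ℝ := fun n => 2 * C₂ ^ α / (t n - M) ^ α with hκdef
  have hκ0 : Tendsto κ atTop (nhds 0) := by
    apply Tendsto.div_atTop tendsto_const_nhds
    exact (tendsto_rpow_atTop hα).comp (tendsto_atTop_add_const_right _ (-M) ht)
  have hbd := key_bd α hα T hT0 htail C₁ C₂ hC₁ σs hσ t ht M hM c hc
  have hκhalf : ∀ᶠ n in atTop, κ n ≤ 1/2 := by
    have := hκ0.eventually_lt_const (show (0:ℝ) < 1/2 by norm_num)
    filter_upwards [this] with n hn; linarith
  set Sl : ℕ → ℝ := fun n => ∑ i ∈ Finset.range (k n),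
      Real.log (1 - T ((t n - c i) / σs i)) with hSldef
  have hsandwich : ∀ᶠ n in atTop,
      -(S n) - 2 * (κ n * S n) ≤ Sl n ∧ Sl n ≤ -(S n) ∧
      ∀ i ∈ Finset.range (k n), (0:ℝ) < 1 - T ((t n - c i) / σs i) := by
    filter_upwards [hbd, hκhalf] with n hn hκn
    have hui : ∀ i, 0 ≤ T ((t n - c i) / σs i) ∧ T ((t n - c i) / σs i) ≤ κ n :=
      fun i => ⟨hT0 _, hn.2 i⟩
    have hbounds : ∀ i ∈ Finset.range (k n),
        -(T ((t n - c i) / σs i)) - 2 * (κ n * T ((t n - c i) / σs i))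
          ≤ Real.log (1 - T ((t n - c i) / σs i)) ∧
        Real.log (1 - T ((t n - c i) / σs i)) ≤ -(T ((t n - c i) / σs i)) := by
      intro i _
      obtain ⟨h0, hκi⟩ := hui i
      have hhalf : T ((t n - c i) / σs i) ≤ 1/2 := le_trans hκi hκn
      obtain ⟨hlo, hhi⟩ := log_one_sub_bounds h0 hhalf
      refine ⟨le_trans ?_ hlo, hhi⟩
      nlinarith [hκi, h0]
    refine ⟨?_, ?_, ?_⟩
    · calc -(S n) - 2 * (κ n * S n)
          = ∑ i ∈ Finset.range (k n), (-(T ((t n - c i) / σs i)) - 2 * (κ n * T ((t n - c i) / σs i))) := by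
            rw [hSdef]
            simp only [Finset.mul_sum, Finset.sum_sub_distrib, Finset.sum_neg_distrib]
        _ ≤ Sl n := Finset.sum_le_sum (fun i hi => (hbounds i hi).1)
    · calc Sl n ≤ ∑ i ∈ Finset.range (k n), -(T ((t n - c i) / σs i)) :=
            Finset.sum_le_sum (fun i hi => (hbounds i hi).2)
        _ = -(S n) := by rw [hSdef, ← Finset.sum_neg_distrib]
    · intro i hi
      have hhalf : T ((t n - c i) / σs i) ≤ 1/2 := le_trans (hui i).2 hκn
      linarith
  have hSl : Tendsto Sl atTop (nhds (-L)) := by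
    have hlow : Tendsto (fun n => -(S n) - 2 * (κ n * S n)) atTop (nhds (-L)) := by
      have : Tendsto (fun n => -(S n) - 2 * (κ n * S n)) atTop (nhds (-L - 2 * (0 * L))) :=
        (hS.neg).sub (tendsto_const_nhds.mul (hκ0.mul hS))
      simpa using this
    have hhigh : Tendsto (fun n => -(S n)) atTop (nhds (-L)) := hS.neg
    refine tendsto_of_tendsto_of_tendsto_of_le_of_le' hlow hhigh ?_ ?_
    · filter_upwards [hsandwich] with n hn; exact hn.1
    · filter_upwards [hsandwich] with n hn; exact hn.2.1
  have hexp : Tendsto (fun n => Real.exp (Sl n)) atTop (nhds (Real.exp (-L))) :=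
    (Real.continuous_exp.tendsto _).comp hSl
  refine hexp.congr' ?_
  filter_upwards [hsandwich] with n hn
  rw [hSldef]
  rw [Real.exp_sum]
  exact Finset.prod_congr rfl (fun i hi => Real.exp_log (hn.2.2 i hi))

lemma sum_rpow_lb (σs : ℕ → ℝ) (C₁ : ℝ) (α : ℝ) (hσ : ∀ i, C₁ ≤ σs i) (hC₁ : 0 < C₁)
    (hα : 0 < α) (p : ℕ) :
    (p : ℝ) * C₁ ^ α ≤ ∑ i ∈ Finset.range p, σs i ^ α := by
  calc (p : ℝ) * C₁ ^ α = ∑ _i ∈ Finset.range p, C₁ ^ α := by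
        rw [Finset.sum_const, Finset.card_range, nsmul_eq_mul]
    _ ≤ ∑ i ∈ Finset.range p, σs i ^ α :=
        Finset.sum_le_sum fun i _ => Real.rpow_le_rpow hC₁.le (hσ i) hα.le

lemma sum_rpow_ub (σs : ℕ → ℝ) (C₁ C₂ : ℝ) (α : ℝ) (hσ : ∀ i, σs i ∈ Set.Icc C₁ C₂)
    (hC₁ : 0 < C₁) (hα : 0 < α) (p : ℕ) :
    ∑ i ∈ Finset.range p, σs i ^ α ≤ (p : ℝ) * C₂ ^ α := by
  calc ∑ i ∈ Finset.range p, σs i ^ α ≤ ∑ _i ∈ Finset.range p, C₂ ^ α :=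
        Finset.sum_le_sum fun i _ => Real.rpow_le_rpow (hC₁.le.trans (hσ i).1) (hσ i).2 hα.le
    _ = (p : ℝ) * C₂ ^ α := by rw [Finset.sum_const, Finset.card_range, nsmul_eq_mul]

lemma part1 (C₁ C₂ : ℝ) (hC₁ : 0 < C₁) (σ σt : ℕ → ℝ)
    (hσ : ∀ i, σ i ∈ Set.Icc C₁ C₂) (hσt : ∀ j, σt j ∈ Set.Icc C₁ C₂)
    (α : ℝ) (hα : 0 < α) (p₁ p₂ : ℕ → ℕ) (hp₂pos : ∀ n, 0 < p₂ n)
    (hratio : Tendsto (fun n => (p₁ n : ℝ) / (p₂ n : ℝ)) atTop (nhds 0)) :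
    Tendsto (fun n => normConst σ α (p₁ n) / normConst σt α (p₂ n)) atTop (nhds 0) := by
  have hC₂ : 0 < C₂ := lt_of_lt_of_le hC₁ (le_trans (hσ 0).1 (hσ 0).2)
  set A₁ : ℕ → ℝ := fun n => ∑ i ∈ Finset.range (p₁ n), σ i ^ α with hA₁
  set A₂ : ℕ → ℝ := fun n => ∑ j ∈ Finset.range (p₂ n), σt j ^ α with hA₂
  have hA₁nn : ∀ n, 0 ≤ A₁ n :=
    fun n => Finset.sum_nonneg fun i _ => Real.rpow_nonneg (hC₁.le.trans (hσ i).1) _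
  have hA₂pos : ∀ n, 0 < A₂ n := by
    intro n
    have h1 := sum_rpow_lb σt C₁ α (fun j => (hσt j).1) hC₁ hα (p₂ n)
    have h2 : (0:ℝ) < (p₂ n : ℝ) * C₁ ^ α := by
      have := hp₂pos n
      have : (0:ℝ) < (p₂ n : ℝ) := by exact_mod_cast this
      positivity
    linarith
  have hub : ∀ n, normConst σ α (p₁ n) / normConst σt α (p₂ n)
      ≤ ((C₂ ^ α / C₁ ^ α) * ((p₁ n : ℝ) / (p₂ n : ℝ))) ^ (1/α) := by
    intro n
    have h1 : normConst σ α (p₁ n) / normConst σt α (p₂ n) = (A₁ n / A₂ n) ^ (1/α) := by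
      rw [normConst, normConst, ← Real.div_rpow (hA₁nn n) (hA₂pos n).le]
    rw [h1]
    apply Real.rpow_le_rpow (div_nonneg (hA₁nn n) (hA₂pos n).le) ?_ (by positivity)
    have hA₁ub := sum_rpow_ub σ C₁ C₂ α hσ hC₁ hα (p₁ n)
    have hA₂lb := sum_rpow_lb σt C₁ α (fun j => (hσt j).1) hC₁ hα (p₂ n)
    have hp₂ : (0:ℝ) < (p₂ n : ℝ) := by exact_mod_cast hp₂pos n
    calc A₁ n / A₂ n ≤ ((p₁ n : ℝ) * C₂ ^ α) / ((p₂ n : ℝ) * C₁ ^ α) := by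
          apply div_le_div₀ ?_ hA₁ub ?_ hA₂lb
          · positivity
          · positivity
      _ = (C₂ ^ α / C₁ ^ α) * ((p₁ n : ℝ) / (p₂ n : ℝ)) := by ring
  have hlim : Tendsto (fun n => ((C₂ ^ α / C₁ ^ α) * ((p₁ n : ℝ) / (p₂ n : ℝ))) ^ (1/α))
      atTop (nhds 0) := by
    have h1 : Tendsto (fun n => (C₂ ^ α / C₁ ^ α) * ((p₁ n : ℝ) / (p₂ n : ℝ))) atTop (nhds 0) := by
      simpa using tendsto_const_nhds.mul hratio
    have h2 := h1.rpow_const (p := 1/α) (Or.inr (by positivity))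
    rwa [Real.zero_rpow (by positivity)] at h2
  have hnn : ∀ n, 0 ≤ normConst σ α (p₁ n) / normConst σt α (p₂ n) := by
    intro n
    apply div_nonneg <;> exact Real.rpow_nonneg (Finset.sum_nonneg fun i _ =>
      Real.rpow_nonneg (hC₁.le.trans (by first | exact (hσ i).1 | exact (hσt i).1)) _) _
  exact squeeze_zero hnn hub hlim

def mixSets (d : ℕ) (c₁ c₂ : ℕ → ℝ) : ∀ kk : Unit ⊕ ℕ ⊕ ℕ, Set (mixCodom d kk)
  | Sum.inl _ => Set.univ
  | Sum.inr (Sum.inl i) => (Set.Iic (c₁ i) : Set ℝ)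
  | Sum.inr (Sum.inr j) => (Set.Iic (c₂ j) : Set ℝ)

lemma rect_prob {Ω : Type*} [MeasurableSpace Ω] (P : Measure Ω)
    (d : ℕ) (Z : Ω → Fin d → ℝ)
    (ε₁ ε₂ : ℕ → Ω → ℝ)
    (hindep : iIndepFun (m := fun i => mixCodomMeasurableSpace d i) (mixFun Z ε₁ ε₂) P)
    (q₁ q₂ : ℕ) (c₁ c₂ : ℕ → ℝ) :
    P ((⋂ i ∈ Finset.range q₁, ε₁ i ⁻¹' Set.Iic (c₁ i)) ∩
       (⋂ j ∈ Finset.range q₂, ε₂ j ⁻¹' Set.Iic (c₂ j)))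
      = (∏ i ∈ Finset.range q₁, P (ε₁ i ⁻¹' Set.Iic (c₁ i))) *
        ∏ j ∈ Finset.range q₂, P (ε₂ j ⁻¹' Set.Iic (c₂ j)) := by
  classical
  set S : Finset (Unit ⊕ ℕ ⊕ ℕ) :=
    ((Finset.range q₁).image (fun i => Sum.inr (Sum.inl i))) ∪
    ((Finset.range q₂).image (fun j => Sum.inr (Sum.inr j))) with hS
  have hmeas : ∀ kk ∈ S,
      MeasurableSet[mixCodomMeasurableSpace d kk] (mixSets d c₁ c₂ kk) := by
    rintro (u | i | j) _
    · exact MeasurableSet.univ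
    · exact (measurableSet_Iic : MeasurableSet (Set.Iic (c₁ i)))
    · exact (measurableSet_Iic : MeasurableSet (Set.Iic (c₂ j)))
  have key := (iIndepFun_iff_measure_inter_preimage_eq_mul.mp hindep) S hmeas
  have hinter : (⋂ kk ∈ S, mixFun Z ε₁ ε₂ kk ⁻¹' mixSets d c₁ c₂ kk)
      = (⋂ i ∈ Finset.range q₁, ε₁ i ⁻¹' Set.Iic (c₁ i)) ∩
        (⋂ j ∈ Finset.range q₂, ε₂ j ⁻¹' Set.Iic (c₂ j)) := by
    rw [hS, Finset.set_biInter_inter, Finset.set_biInter_finset_image,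
      Finset.set_biInter_finset_image]
    rfl
  have hdisj : Disjoint ((Finset.range q₁).image (fun i => Sum.inr (Sum.inl i) : ℕ → Unit ⊕ ℕ ⊕ ℕ))
      ((Finset.range q₂).image (fun j => Sum.inr (Sum.inr j) : ℕ → Unit ⊕ ℕ ⊕ ℕ)) := by
    simp [Finset.disjoint_left, Finset.mem_image]
  rw [hinter] at key
  rw [key, hS, Finset.prod_union hdisj,
    Finset.prod_image (by intro x _ y _ h; simpa using h),
    Finset.prod_image (by intro x _ y _ h; simpa using h)]
  rfl

lemma prob_eq_integral {Ω : Type*} [MeasurableSpace Ω] (P : Measure Ω) [IsProbabilityMeasure P]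
    (d : ℕ) (Z : Ω → Fin d → ℝ) (hZm : Measurable Z)
    (f g : ℕ → (Fin d → ℝ) → ℝ) (hfm : ∀ i, Measurable (f i)) (hgm : ∀ j, Measurable (g j))
    (σ σt : ℕ → ℝ) (hσpos : ∀ i, 0 < σ i) (hσtpos : ∀ j, 0 < σt j)
    (ε₁ ε₂ : ℕ → Ω → ℝ) (hε₁m : ∀ i, Measurable (ε₁ i)) (hε₂m : ∀ j, Measurable (ε₂ j))
    (hid₁ : ∀ i, IdentDistrib (ε₁ i) (ε₁ 0) P P)
    (hid₂ : ∀ j, IdentDistrib (ε₂ j) (ε₂ 0) P P)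
    (hindep : iIndepFun (m := fun i => mixCodomMeasurableSpace d i) (mixFun Z ε₁ ε₂) P)
    (X₁ X₂ : ℕ → Ω → ℝ)
    (hX₁ : ∀ i ω, X₁ i ω = f i (Z ω) + σ i * ε₁ i ω)
    (hX₂ : ∀ j ω, X₂ j ω = g j (Z ω) + σt j * ε₂ j ω)
    (q₁ q₂ : ℕ) (hq₁ : 0 < q₁) (hq₂ : 0 < q₂) (t : ℝ) :
    (P {ω | Qmax X₁ X₂ q₁ q₂ ω ≤ t}).toReal
      = ∫ z, (∏ i ∈ Finset.range q₁, (P {ω | ε₁ 0 ω ≤ (t - f i z) / σ i}).toReal) *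
             (∏ j ∈ Finset.range q₂, (P {ω | ε₂ 0 ω ≤ (t - g j z) / σt j}).toReal)
          ∂(P.map Z) := by
  classical
  haveI : Nonempty (Fin q₁) := Fin.pos_iff_nonempty.mp hq₁
  haveI : Nonempty (Fin q₂) := Fin.pos_iff_nonempty.mp hq₂
  set F1 : ℝ → ℝ := fun y => (P {ω | ε₁ 0 ω ≤ y}).toReal with hF1def
  set F2 : ℝ → ℝ := fun y => (P {ω | ε₂ 0 ω ≤ y}).toReal with hF2def
  have hF1mono : Monotone F1 := by
    intro a b hab
    exact ENNReal.toReal_mono (measure_ne_top P _)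
      (measure_mono (fun ω h => le_trans h hab))
  have hF2mono : Monotone F2 := by
    intro a b hab
    exact ENNReal.toReal_mono (measure_ne_top P _)
      (measure_mono (fun ω h => le_trans h hab))
  set H : (Fin d → ℝ) → ℝ := fun z =>
    (∏ i ∈ Finset.range q₁, F1 ((t - f i z) / σ i)) *
    (∏ j ∈ Finset.range q₂, F2 ((t - g j z) / σt j)) with hHdef
  have hHm : Measurable H := by
    apply Measurable.mul
    · apply Finset.measurable_prod
      intro i _
      exact hF1mono.measurable.comp ((measurable_const.sub (hfm i)).div_const _)
    · apply Finset.measurable_prod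
      intro j _
      exact hF2mono.measurable.comp ((measurable_const.sub (hgm j)).div_const _)
  have hH0 : ∀ z, 0 ≤ H z := by
    intro z
    apply mul_nonneg <;> exact Finset.prod_nonneg fun _ _ => ENNReal.toReal_nonneg
  have hH1 : ∀ z, H z ≤ 1 := by
    intro z
    have p1 : (∏ i ∈ Finset.range q₁, F1 ((t - f i z) / σ i)) ≤ 1 :=
      Finset.prod_le_one (fun _ _ => ENNReal.toReal_nonneg)
        (fun _ _ => by simpa using ENNReal.toReal_mono (measure_ne_top P _) (measure_mono (Set.subset_univ _)) |>.trans_eq (by simp))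
    have p2 : (∏ j ∈ Finset.range q₂, F2 ((t - g j z) / σt j)) ≤ 1 :=
      Finset.prod_le_one (fun _ _ => ENNReal.toReal_nonneg)
        (fun _ _ => by simpa using ENNReal.toReal_mono (measure_ne_top P _) (measure_mono (Set.subset_univ _)) |>.trans_eq (by simp))
    calc H z ≤ 1 * 1 := mul_le_mul p1 p2 (Finset.prod_nonneg fun _ _ => ENNReal.toReal_nonneg) (by norm_num)
      _ = 1 := by norm_num
  -- the noise vector
  set W : Ω → (Fin q₁ → ℝ) × (Fin q₂ → ℝ) :=
    fun ω => (fun i => ε₁ i ω, fun j => ε₂ j ω) with hWdef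
  have hWm : Measurable W := by
    rw [hWdef]
    exact (measurable_pi_lambda _ fun i : Fin q₁ => hε₁m (i : ℕ)).prodMk
      (measurable_pi_lambda _ fun j : Fin q₂ => hε₂m (j : ℕ))
  -- independence of Z and W
  have hZW : IndepFun Z W P := by
    set S : Finset (Unit ⊕ ℕ ⊕ ℕ) := {Sum.inl ()} with hSdef
    set T : Finset (Unit ⊕ ℕ ⊕ ℕ) :=
      ((Finset.range q₁).image (fun i => Sum.inr (Sum.inl i))) ∪
      ((Finset.range q₂).image (fun j => Sum.inr (Sum.inr j))) with hTdef
    have hdisj : Disjoint S T := by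
      simp [hSdef, hTdef, Finset.disjoint_left, Finset.mem_image]
    have hmixm : ∀ kk, Measurable (mixFun Z ε₁ ε₂ kk) := by
      rintro (u | i | j)
      · exact hZm
      · exact hε₁m i
      · exact hε₂m j
    have base := hindep.indepFun_finset S T hdisj hmixm
    have hmem : (Sum.inl () : Unit ⊕ ℕ ⊕ ℕ) ∈ S := Finset.mem_singleton_self _
    set φ : (∀ kk : S, mixCodom d kk) → (Fin d → ℝ) := fun v => v ⟨Sum.inl (), hmem⟩ with hφdef
    have hφ : Measurable φ := measurable_pi_apply _
    have hmem1 : ∀ i : Fin q₁, (Sum.inr (Sum.inl (i : ℕ)) : Unit ⊕ ℕ ⊕ ℕ) ∈ T := fun i =>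
      Finset.mem_union_left _ (Finset.mem_image_of_mem _ (Finset.mem_range.mpr i.isLt))
    have hmem2 : ∀ j : Fin q₂, (Sum.inr (Sum.inr (j : ℕ)) : Unit ⊕ ℕ ⊕ ℕ) ∈ T := fun j =>
      Finset.mem_union_right _ (Finset.mem_image_of_mem _ (Finset.mem_range.mpr j.isLt))
    set ψ : (∀ kk : T, mixCodom d kk) → (Fin q₁ → ℝ) × (Fin q₂ → ℝ) :=
      fun v => (fun i => v ⟨Sum.inr (Sum.inl (i : ℕ)), hmem1 i⟩,
                fun j => v ⟨Sum.inr (Sum.inr (j : ℕ)), hmem2 j⟩) with hψdef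
    have hψ : Measurable ψ := by
      apply Measurable.prodMk
      · exact measurable_pi_lambda _ fun i => measurable_pi_apply _
      · exact measurable_pi_lambda _ fun j => measurable_pi_apply _
    exact base.comp hφ hψ
  -- the event as a product-space preimage
  set B : Set ((Fin d → ℝ) × ((Fin q₁ → ℝ) × (Fin q₂ → ℝ))) :=
    {q | (∀ i : Fin q₁, q.2.1 i ≤ (t - f (i : ℕ) q.1) / σ (i : ℕ)) ∧
         (∀ j : Fin q₂, q.2.2 j ≤ (t - g (j : ℕ) q.1) / σt (j : ℕ))} with hBdef
  have hBm : MeasurableSet B := by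
    have hBeq : B = (⋂ i : Fin q₁, {q : (Fin d → ℝ) × ((Fin q₁ → ℝ) × (Fin q₂ → ℝ)) |
          q.2.1 i ≤ (t - f (i : ℕ) q.1) / σ (i : ℕ)}) ∩
        (⋂ j : Fin q₂, {q : (Fin d → ℝ) × ((Fin q₁ → ℝ) × (Fin q₂ → ℝ)) |
          q.2.2 j ≤ (t - g (j : ℕ) q.1) / σt (j : ℕ)}) := by
      ext q
      simp [hBdef, Set.mem_iInter]
    rw [hBeq]
    apply MeasurableSet.inter
    · apply MeasurableSet.iInter
      intro i
      exact measurableSet_le (measurable_snd.fst.eval)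
        (((measurable_const.sub ((hfm _).comp measurable_fst))).div_const _)
    · apply MeasurableSet.iInter
      intro j
      exact measurableSet_le (measurable_snd.snd.eval)
        (((measurable_const.sub ((hgm _).comp measurable_fst))).div_const _)
  have hpre : {ω | Qmax X₁ X₂ q₁ q₂ ω ≤ t} = (fun ω => (Z ω, W ω)) ⁻¹' B := by
    ext ω
    simp only [Set.mem_setOf_eq, Set.mem_preimage, hBdef, Qmax, max_le_iff]
    constructor
    · rintro ⟨h1, h2⟩
      constructor
      · intro i
        have := (ciSup_le_iff (Set.Finite.bddAbove (Set.finite_range _))).mp h1 i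
        rw [hX₁] at this
        rw [le_div_iff₀ (hσpos (i : ℕ))]
        linarith
      · intro j
        have := (ciSup_le_iff (Set.Finite.bddAbove (Set.finite_range _))).mp h2 j
        rw [hX₂] at this
        rw [le_div_iff₀ (hσtpos (j : ℕ))]
        linarith
    · rintro ⟨h1, h2⟩
      constructor
      · apply ciSup_le
        intro i
        have := h1 i
        rw [le_div_iff₀ (hσpos (i : ℕ))] at this
        rw [hX₁]
        linarith
      · apply ciSup_le
        intro j
        have := h2 j
        rw [le_div_iff₀ (hσtpos (j : ℕ))] at this
        rw [hX₂]
        linarith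
  haveI : IsProbabilityMeasure (P.map Z) := Measure.isProbabilityMeasure_map hZm.aemeasurable
  haveI : IsProbabilityMeasure (P.map W) := Measure.isProbabilityMeasure_map hWm.aemeasurable
  have hmap : P {ω | Qmax X₁ X₂ q₁ q₂ ω ≤ t} = ((P.map Z).prod (P.map W)) B := by
    rw [hpre, ← Measure.map_apply (hZm.prodMk hWm) hBm,
      (indepFun_iff_map_prod_eq_prod_map_map hZm.aemeasurable hWm.aemeasurable).mp hZW]
  have hslice : ∀ z, (P.map W) (Prod.mk z ⁻¹' B) = ENNReal.ofReal (H z) := by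
    intro z
    have hrect : Prod.mk z ⁻¹' B =
        (Set.univ.pi fun i : Fin q₁ => Set.Iic ((t - f (i : ℕ) z) / σ (i : ℕ))) ×ˢ
        (Set.univ.pi fun j : Fin q₂ => Set.Iic ((t - g (j : ℕ) z) / σt (j : ℕ))) := by
      ext w
      simp only [hBdef, Set.mem_preimage, Set.mem_setOf_eq, Set.mem_prod, Set.mem_pi,
        Set.mem_univ, true_implies, Set.mem_Iic]
    have hrectm : MeasurableSet
        ((Set.univ.pi fun i : Fin q₁ => Set.Iic ((t - f (i : ℕ) z) / σ (i : ℕ))) ×ˢ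
        (Set.univ.pi fun j : Fin q₂ => Set.Iic ((t - g (j : ℕ) z) / σt (j : ℕ)))) :=
      (MeasurableSet.univ_pi fun i => measurableSet_Iic).prod
        (MeasurableSet.univ_pi fun j => measurableSet_Iic)
    rw [hrect, Measure.map_apply hWm hrectm]
    have hWpre : W ⁻¹' ((Set.univ.pi fun i : Fin q₁ => Set.Iic ((t - f (i : ℕ) z) / σ (i : ℕ))) ×ˢ
        (Set.univ.pi fun j : Fin q₂ => Set.Iic ((t - g (j : ℕ) z) / σt (j : ℕ)))) =
        (⋂ i ∈ Finset.range q₁, ε₁ i ⁻¹' Set.Iic ((t - f i z) / σ i)) ∩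
        (⋂ j ∈ Finset.range q₂, ε₂ j ⁻¹' Set.Iic ((t - g j z) / σt j)) := by
      ext ω
      simp only [hWdef, Set.mem_preimage, Set.mem_prod, Set.mem_pi, Set.mem_univ,
        forall_true_left, Set.mem_inter_iff, Set.mem_iInter, Finset.mem_range, Set.mem_Iic,
        true_implies]
      constructor
      · rintro ⟨h1, h2⟩
        exact ⟨fun i hi => h1 ⟨i, hi⟩, fun j hj => h2 ⟨j, hj⟩⟩
      · rintro ⟨h1, h2⟩
        exact ⟨fun i => h1 (i : ℕ) i.isLt, fun j => h2 (j : ℕ) j.isLt⟩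
    rw [hWpre, rect_prob P d Z ε₁ ε₂ hindep q₁ q₂ _ _]
    have hfac1 : ∀ i : ℕ, P (ε₁ i ⁻¹' Set.Iic ((t - f i z) / σ i))
        = ENNReal.ofReal (F1 ((t - f i z) / σ i)) := by
      intro i
      have h := (hid₁ i).measure_mem_eq (s := Set.Iic ((t - f i z) / σ i)) measurableSet_Iic
      have h2 : P (ε₁ i ⁻¹' Set.Iic ((t - f i z) / σ i))
          = P {ω | ε₁ 0 ω ≤ (t - f i z) / σ i} := h
      rw [h2, hF1def, ENNReal.ofReal_toReal (measure_ne_top P _)]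
    have hfac2 : ∀ j : ℕ, P (ε₂ j ⁻¹' Set.Iic ((t - g j z) / σt j))
        = ENNReal.ofReal (F2 ((t - g j z) / σt j)) := by
      intro j
      have h := (hid₂ j).measure_mem_eq (s := Set.Iic ((t - g j z) / σt j)) measurableSet_Iic
      have h2 : P (ε₂ j ⁻¹' Set.Iic ((t - g j z) / σt j))
          = P {ω | ε₂ 0 ω ≤ (t - g j z) / σt j} := h
      rw [h2, hF2def, ENNReal.ofReal_toReal (measure_ne_top P _)]
    rw [Finset.prod_congr rfl (fun i _ => hfac1 i), Finset.prod_congr rfl (fun j _ => hfac2 j),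
      ← ENNReal.ofReal_prod_of_nonneg (fun _ _ => ENNReal.toReal_nonneg),
      ← ENNReal.ofReal_prod_of_nonneg (fun _ _ => ENNReal.toReal_nonneg),
      ← ENNReal.ofReal_mul (Finset.prod_nonneg fun _ _ => ENNReal.toReal_nonneg)]
  have hHint : Integrable H (P.map Z) := by
    apply Integrable.mono' (integrable_const (1:ℝ)) hHm.aestronglyMeasurable
    filter_upwards with z
    rw [Real.norm_eq_abs, abs_of_nonneg (hH0 z)]
    exact hH1 z
  have hlint : P {ω | Qmax X₁ X₂ q₁ q₂ ω ≤ t} = ∫⁻ z, ENNReal.ofReal (H z) ∂(P.map Z) := by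
    rw [hmap, Measure.prod_apply hBm]
    exact lintegral_congr hslice
  have hfin : P {ω | Qmax X₁ X₂ q₁ q₂ ω ≤ t} = ENNReal.ofReal (∫ z, H z ∂(P.map Z)) := by
    rw [hlint, ← ofReal_integral_eq_lintegral_ofReal hHint (Filter.Eventually.of_forall hH0)]
  rw [hfin, ENNReal.toReal_ofReal (integral_nonneg hH0)]

/-- Prop. 2, Case 2, second subcase: `α₁ = α₂ = α` and `p₁/p₂ → 0` imply `a₁/a₂ → 0` and `P(Q ≤ a₂ x) → Ψ_α(x)` for all `x > 0`. -/
theorem prop2_case2_sub2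
    {Ω : Type*} [MeasurableSpace Ω] (P : Measure Ω) [IsProbabilityMeasure P]
    (d : ℕ) (Z : Ω → Fin d → ℝ) (hZm : Measurable Z)
    (f g : ℕ → (Fin d → ℝ) → ℝ) (hfm : ∀ i, Measurable (f i)) (hgm : ∀ j, Measurable (g j))
    (hfbdd : ∀ᵐ ω ∂P, ∃ M : ℝ, ∀ i, |f i (Z ω)| ≤ M)
    (hgbdd : ∀ᵐ ω ∂P, ∃ M : ℝ, ∀ j, |g j (Z ω)| ≤ M)
    (C₁ C₂ : ℝ) (hC₁ : 0 < C₁) (hC₁₂ : C₁ ≤ C₂)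
    (σ σt : ℕ → ℝ) (hσ : ∀ i, σ i ∈ Set.Icc C₁ C₂) (hσt : ∀ j, σt j ∈ Set.Icc C₁ C₂)
    (α₁ α₂ : ℝ) (hα₁ : 0 < α₁) (hα₂ : 0 < α₂)
    (ε₁ ε₂ : ℕ → Ω → ℝ) (hε₁m : ∀ i, Measurable (ε₁ i)) (hε₂m : ∀ j, Measurable (ε₂ j))
    (hid₁ : ∀ i, IdentDistrib (ε₁ i) (ε₁ 0) P P)
    (hid₂ : ∀ j, IdentDistrib (ε₂ j) (ε₂ 0) P P)
    (hindep : iIndepFun (m := fun i => mixCodomMeasurableSpace d i) (mixFun Z ε₁ ε₂) P)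
    (htail₁ : Tendsto (fun x : ℝ => x ^ α₁ * (P {ω | x < ε₁ 0 ω}).toReal) atTop (nhds 1))
    (htail₂ : Tendsto (fun x : ℝ => x ^ α₂ * (P {ω | x < ε₂ 0 ω}).toReal) atTop (nhds 1))
    (X₁ X₂ : ℕ → Ω → ℝ)
    (hX₁ : ∀ i ω, X₁ i ω = f i (Z ω) + σ i * ε₁ i ω)
    (hX₂ : ∀ j ω, X₂ j ω = g j (Z ω) + σt j * ε₂ j ω)
    (p₁ p₂ : ℕ → ℕ) (hp₁pos : ∀ n, 0 < p₁ n) (hp₂pos : ∀ n, 0 < p₂ n)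
    (hp₁ : Tendsto (fun n => (p₁ n : ℝ)) atTop atTop)
    (hp₂ : Tendsto (fun n => (p₂ n : ℝ)) atTop atTop)
    (α : ℝ) (hα₁α : α₁ = α) (hα₂α : α₂ = α)
    (hratio : Tendsto (fun n => (p₁ n : ℝ) / (p₂ n : ℝ)) atTop (nhds 0)) :
    Tendsto (fun n => normConst σ α₁ (p₁ n) / normConst σt α₂ (p₂ n)) atTop (nhds 0) ∧
    ∀ x : ℝ, 0 < x →
      Tendsto (fun n => (P {ω | Qmax X₁ X₂ (p₁ n) (p₂ n) ω ≤ normConst σt α₂ (p₂ n) * x}).toReal) atTop (nhds (frechetCDF α x)) := by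
  rw [hα₁α] at htail₁ hα₁
  rw [hα₂α] at htail₂ hα₂
  rw [hα₁α, hα₂α]
  have hC₂ : 0 < C₂ := lt_of_lt_of_le hC₁ hC₁₂
  constructor
  · exact part1 C₁ C₂ hC₁ σ σt hσ hσt α hα₁ p₁ p₂ hp₂pos hratio
  intro x hx
  -- abbreviations
  set A₁ : ℕ → ℝ := fun n => ∑ i ∈ Finset.range (p₁ n), σ i ^ α with hA₁def
  set A₂ : ℕ → ℝ := fun n => ∑ j ∈ Finset.range (p₂ n), σt j ^ α with hA₂def
  have hA₂pos : ∀ n, 0 < A₂ n := by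
    intro n
    have h1 := sum_rpow_lb σt C₁ α (fun j => (hσt j).1) hC₁ hα₁ (p₂ n)
    have h2 : (0:ℝ) < (p₂ n : ℝ) := by exact_mod_cast hp₂pos n
    nlinarith [Real.rpow_pos_of_pos hC₁ α]
  have hA₁nn : ∀ n, 0 ≤ A₁ n :=
    fun n => Finset.sum_nonneg fun i _ => Real.rpow_nonneg (hC₁.le.trans (hσ i).1) _
  have ha₂eq : ∀ n, normConst σt α (p₂ n) ^ α = A₂ n := by
    intro n
    rw [normConst, one_div]
    exact Real.rpow_inv_rpow (hA₂pos n).le hα₁.ne'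
  have ha₂pos : ∀ n, 0 < normConst σt α (p₂ n) :=
    fun n => Real.rpow_pos_of_pos (hA₂pos n) _
  have htt : Tendsto (fun n => normConst σt α (p₂ n) * x) atTop atTop := by
    apply Tendsto.atTop_mul_const hx
    have hlb : ∀ n, C₁ * (p₂ n : ℝ) ^ (1/α) ≤ normConst σt α (p₂ n) := by
      intro n
      have h1 := sum_rpow_lb σt C₁ α (fun j => (hσt j).1) hC₁ hα₁ (p₂ n)
      have h2 : ((p₂ n : ℝ) * C₁ ^ α) ^ (1/α) ≤ normConst σt α (p₂ n) :=
        Real.rpow_le_rpow (by positivity) h1 (by positivity)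
      calc C₁ * (p₂ n : ℝ) ^ (1/α) = ((p₂ n : ℝ) * C₁ ^ α) ^ (1/α) := by
            rw [Real.mul_rpow (by positivity) (by positivity), one_div,
              Real.rpow_rpow_inv hC₁.le hα₁.ne']
            ring
        _ ≤ normConst σt α (p₂ n) := h2
    apply tendsto_atTop_mono hlb
    apply Tendsto.const_mul_atTop hC₁
    exact (tendsto_rpow_atTop (by positivity)).comp hp₂
  have httα : ∀ n, (normConst σt α (p₂ n) * x) ^ α = A₂ n * x ^ α := by
    intro n
    rw [Real.mul_rpow (ha₂pos n).le hx.le, ha₂eq n]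
  have hxα : (0:ℝ) < x ^ α := Real.rpow_pos_of_pos hx _
  have hs₂ : Tendsto (fun n => A₂ n / (normConst σt α (p₂ n) * x) ^ α) atTop
      (nhds (x ^ (-α))) := by
    have heq : ∀ n, A₂ n / (normConst σt α (p₂ n) * x) ^ α = x ^ (-α) := by
      intro n
      rw [httα n, Real.rpow_neg hx.le]
      field_simp [(hA₂pos n).ne']
    exact tendsto_const_nhds.congr (fun n => (heq n).symm)
  have hs₁ : Tendsto (fun n => A₁ n / (normConst σt α (p₂ n) * x) ^ α) atTop (nhds 0) := by
    have hnn : ∀ n, 0 ≤ A₁ n / (normConst σt α (p₂ n) * x) ^ α := by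
      intro n
      apply div_nonneg (hA₁nn n)
      rw [httα n]
      exact mul_nonneg (hA₂pos n).le hxα.le
    have hub : ∀ n, A₁ n / (normConst σt α (p₂ n) * x) ^ α
        ≤ (C₂ ^ α / (C₁ ^ α * x ^ α)) * ((p₁ n : ℝ) / (p₂ n : ℝ)) := by
      intro n
      have h1 := sum_rpow_ub σ C₁ C₂ α hσ hC₁ hα₁ (p₁ n)
      have h2 := sum_rpow_lb σt C₁ α (fun j => (hσt j).1) hC₁ hα₁ (p₂ n)
      have hp₂r : (0:ℝ) < (p₂ n : ℝ) := by exact_mod_cast hp₂pos n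
      have hC₁α : (0:ℝ) < C₁ ^ α := Real.rpow_pos_of_pos hC₁ _
      rw [httα n]
      calc A₁ n / (A₂ n * x ^ α)
          ≤ ((p₁ n : ℝ) * C₂ ^ α) / (((p₂ n : ℝ) * C₁ ^ α) * x ^ α) := by
            apply div_le_div₀ (by positivity) h1 (by positivity)
            apply mul_le_mul_of_nonneg_right h2 hxα.le
        _ = (C₂ ^ α / (C₁ ^ α * x ^ α)) * ((p₁ n : ℝ) / (p₂ n : ℝ)) := by
            field_simp
    have hlim : Tendsto (fun n => (C₂ ^ α / (C₁ ^ α * x ^ α)) * ((p₁ n : ℝ) / (p₂ n : ℝ)))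
        atTop (nhds 0) := by
      simpa using tendsto_const_nhds.mul hratio
    exact squeeze_zero hnn hub hlim
  -- survival functions
  set T1 : ℝ → ℝ := fun y => (P {ω | y < ε₁ 0 ω}).toReal with hT1def
  set T2 : ℝ → ℝ := fun y => (P {ω | y < ε₂ 0 ω}).toReal with hT2def
  have hT10 : ∀ y, 0 ≤ T1 y := fun y => ENNReal.toReal_nonneg
  have hT20 : ∀ y, 0 ≤ T2 y := fun y => ENNReal.toReal_nonneg
  have hF1T : ∀ y, (P {ω | ε₁ 0 ω ≤ y}).toReal = 1 - T1 y := by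
    intro y
    have hc : {ω | ε₁ 0 ω ≤ y} = {ω | y < ε₁ 0 ω}ᶜ := by
      ext ω; simp [not_lt]
    have hms : MeasurableSet {ω | y < ε₁ 0 ω} := measurableSet_lt measurable_const (hε₁m 0)
    rw [hc, measure_compl hms (measure_ne_top P _), measure_univ,
      ENNReal.toReal_sub_of_le prob_le_one ENNReal.one_ne_top, ENNReal.toReal_one]
  have hF2T : ∀ y, (P {ω | ε₂ 0 ω ≤ y}).toReal = 1 - T2 y := by
    intro y
    have hc : {ω | ε₂ 0 ω ≤ y} = {ω | y < ε₂ 0 ω}ᶜ := by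
      ext ω; simp [not_lt]
    have hms : MeasurableSet {ω | y < ε₂ 0 ω} := measurableSet_lt measurable_const (hε₂m 0)
    rw [hc, measure_compl hms (measure_ne_top P _), measure_univ,
      ENNReal.toReal_sub_of_le prob_le_one ENNReal.one_ne_top, ENNReal.toReal_one]
  -- the integrand functions
  set Hn : ℕ → (Fin d → ℝ) → ℝ := fun n z =>
    (∏ i ∈ Finset.range (p₁ n),
      (P {ω | ε₁ 0 ω ≤ (normConst σt α (p₂ n) * x - f i z) / σ i}).toReal) *
    (∏ j ∈ Finset.range (p₂ n),
      (P {ω | ε₂ 0 ω ≤ (normConst σt α (p₂ n) * x - g j z) / σt j}).toReal) with hHndef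
  have hfn : ∀ n, (P {ω | Qmax X₁ X₂ (p₁ n) (p₂ n) ω ≤ normConst σt α (p₂ n) * x}).toReal
      = ∫ z, Hn n z ∂(P.map Z) := by
    intro n
    exact prob_eq_integral P d Z hZm f g hfm hgm σ σt
      (fun i => lt_of_lt_of_le hC₁ (hσ i).1) (fun j => lt_of_lt_of_le hC₁ (hσt j).1)
      ε₁ ε₂ hε₁m hε₂m hid₁ hid₂ hindep X₁ X₂ hX₁ hX₂
      (p₁ n) (p₂ n) (hp₁pos n) (hp₂pos n) (normConst σt α (p₂ n) * x)
  -- monotone CDFs are measurable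
  have hF1mono : Monotone (fun y => (P {ω | ε₁ 0 ω ≤ y}).toReal) := by
    intro a b hab
    exact ENNReal.toReal_mono (measure_ne_top P _)
      (measure_mono (fun ω h => le_trans h hab))
  have hF2mono : Monotone (fun y => (P {ω | ε₂ 0 ω ≤ y}).toReal) := by
    intro a b hab
    exact ENNReal.toReal_mono (measure_ne_top P _)
      (measure_mono (fun ω h => le_trans h hab))
  have hHnm : ∀ n, Measurable (Hn n) := by
    intro n
    apply Measurable.mul
    · apply Finset.measurable_prod
      intro i _
      exact hF1mono.measurable.comp ((measurable_const.sub (hfm i)).div_const _)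
    · apply Finset.measurable_prod
      intro j _
      exact hF2mono.measurable.comp ((measurable_const.sub (hgm j)).div_const _)
  have hHn01 : ∀ n z, 0 ≤ Hn n z ∧ Hn n z ≤ 1 := by
    intro n z
    have h1 : ∀ (q : ℕ) (c : ℕ → ℝ), (0:ℝ) ≤ ∏ i ∈ Finset.range q, (P {ω | ε₁ 0 ω ≤ c i}).toReal ∧
        (∏ i ∈ Finset.range q, (P {ω | ε₁ 0 ω ≤ c i}).toReal) ≤ 1 := by
      intro q c
      constructor
      · exact Finset.prod_nonneg fun _ _ => ENNReal.toReal_nonneg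
      · apply Finset.prod_le_one (fun _ _ => ENNReal.toReal_nonneg)
        intro i _
        calc (P {ω | ε₁ 0 ω ≤ c i}).toReal ≤ (P Set.univ).toReal :=
              ENNReal.toReal_mono (measure_ne_top P _) (measure_mono (Set.subset_univ _))
          _ = 1 := by simp
    have h2 : ∀ (q : ℕ) (c : ℕ → ℝ), (0:ℝ) ≤ ∏ j ∈ Finset.range q, (P {ω | ε₂ 0 ω ≤ c j}).toReal ∧
        (∏ j ∈ Finset.range q, (P {ω | ε₂ 0 ω ≤ c j}).toReal) ≤ 1 := by
      intro q c
      constructor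
      · exact Finset.prod_nonneg fun _ _ => ENNReal.toReal_nonneg
      · apply Finset.prod_le_one (fun _ _ => ENNReal.toReal_nonneg)
        intro j _
        calc (P {ω | ε₂ 0 ω ≤ c j}).toReal ≤ (P Set.univ).toReal :=
              ENNReal.toReal_mono (measure_ne_top P _) (measure_mono (Set.subset_univ _))
          _ = 1 := by simp
    obtain ⟨ha, hb⟩ := h1 (p₁ n) (fun i => (normConst σt α (p₂ n) * x - f i z) / σ i)
    obtain ⟨hcn, hd⟩ := h2 (p₂ n) (fun j => (normConst σt α (p₂ n) * x - g j z) / σt j)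
    constructor
    · exact mul_nonneg ha hcn
    · calc Hn n z ≤ 1 * 1 := mul_le_mul hb hd hcn (by norm_num)
        _ = 1 := by norm_num
  -- the good set of factor values
  set G : Set (Fin d → ℝ) := {z | (∃ m : ℕ, ∀ i, |f i z| ≤ (m:ℝ)) ∧
      (∃ m : ℕ, ∀ j, |g j z| ≤ (m:ℝ))} with hGdef
  have hGm : MeasurableSet G := by
    have hGeq : G = (⋃ m : ℕ, ⋂ i : ℕ, {z : Fin d → ℝ | |f i z| ≤ (m:ℝ)}) ∩
        (⋃ m : ℕ, ⋂ j : ℕ, {z : Fin d → ℝ | |g j z| ≤ (m:ℝ)}) := by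
      ext z
      simp [hGdef, Set.mem_iUnion, Set.mem_iInter]
    rw [hGeq]
    apply MeasurableSet.inter
    · apply MeasurableSet.iUnion
      intro m
      apply MeasurableSet.iInter
      intro i
      exact measurableSet_le (hfm i).abs measurable_const
    · apply MeasurableSet.iUnion
      intro m
      apply MeasurableSet.iInter
      intro j
      exact measurableSet_le (hgm j).abs measurable_const
  have hGae : ∀ᵐ z ∂(P.map Z), z ∈ G := by
    refine (MeasureTheory.ae_map_iff hZm.aemeasurable hGm).mpr ?_
    filter_upwards [hfbdd, hgbdd] with ω hf hg
    obtain ⟨M₁, hM₁⟩ := hf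
    obtain ⟨M₂, hM₂⟩ := hg
    exact ⟨⟨⌈M₁⌉₊, fun i => (hM₁ i).trans (Nat.le_ceil M₁)⟩,
      ⟨⌈M₂⌉₊, fun j => (hM₂ j).trans (Nat.le_ceil M₂)⟩⟩
  -- a.e. pointwise convergence
  set Lim : ℝ := Real.exp (-0) * Real.exp (-(x ^ (-α))) with hLimdef
  have hptwise : ∀ᵐ z ∂(P.map Z), Tendsto (fun n => Hn n z) atTop (nhds Lim) := by
    filter_upwards [hGae] with z hz
    obtain ⟨⟨m₁, hm₁⟩, ⟨m₂, hm₂⟩⟩ := hz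
    set M : ℝ := max (m₁ : ℝ) (m₂ : ℝ) with hMdef
    have hM : 0 ≤ M := le_trans (Nat.cast_nonneg m₁) (le_max_left _ _)
    have hc₁ : ∀ i, |f i z| ≤ M := fun i => (hm₁ i).trans (le_max_left _ _)
    have hc₂ : ∀ j, |g j z| ≤ M := fun j => (hm₂ j).trans (le_max_right _ _)
    have conv1 := key_prod α hα₁ T1 hT10 htail₁ C₁ C₂ hC₁ σ hσ p₁
      (fun n => normConst σt α (p₂ n) * x) htt M hM (fun i => f i z) hc₁ 0 le_rfl hs₁
    have conv2 := key_prod α hα₁ T2 hT20 htail₂ C₁ C₂ hC₁ σt hσt p₂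
      (fun n => normConst σt α (p₂ n) * x) htt M hM (fun j => g j z) hc₂
      (x ^ (-α)) (Real.rpow_nonneg hx.le _) hs₂
    have hmul := conv1.mul conv2
    refine hmul.congr (fun n => ?_)
    rw [hHndef]
    congr 1
    · exact Finset.prod_congr rfl (fun i _ => (hF1T _).symm)
    · exact Finset.prod_congr rfl (fun j _ => (hF2T _).symm)
  -- dominated convergence
  haveI : IsProbabilityMeasure (P.map Z) := Measure.isProbabilityMeasure_map hZm.aemeasurable
  have hDCT : Tendsto (fun n => ∫ z, Hn n z ∂(P.map Z)) atTop
      (nhds (∫ _z, Lim ∂(P.map Z))) := by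
    apply MeasureTheory.tendsto_integral_filter_of_dominated_convergence
      (bound := fun _ => (1:ℝ))
    · exact Filter.Eventually.of_forall fun n => (hHnm n).aestronglyMeasurable
    · apply Filter.Eventually.of_forall
      intro n
      apply Filter.Eventually.of_forall
      intro z
      rw [Real.norm_eq_abs, abs_of_nonneg (hHn01 n z).1]
      exact (hHn01 n z).2
    · exact integrable_const _
    · exact hptwise
  have hconst : (∫ _z, Lim ∂(P.map Z)) = Lim := by
    simp
  rw [hconst] at hDCT
  have hfinal : Lim = frechetCDF α x := by
    rw [hLimdef, frechetCDF, if_pos hx, neg_zero, Real.exp_zero, one_mul]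
  rw [← hfinal]
  exact (Filter.Tendsto.congr (fun n => (hfn n).symm)) hDCT
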